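/- Let F(w_1,w_2,w_3) = H((w_1−w_2)/(1−w_2), w_3(1−w_2)/(1−w_3)) / ((1−w_2)(1−w_3)) for some formal power series H(x,y) ∈ ℂ[[x,y]]. Then F satisfies the differential equation (1−w_1)∂F/∂w_1 + (1−w_2)∂F/∂w_2 + w_3(1−w_3)∂F/∂w_3 = (1+w_3)F. -/

import Mathlib

open MvPowerSeries

/-- Formal partial derivative of a power series in three variables. -/
noncomputable def pderiv3 (i : Fin 3) (F : MvPowerSeries (Fin 3) ℂ) :
    MvPowerSeries (Fin 3) ℂ :=
  fun m => ((m i : ℂ) + 1) * coeff (m + Finsupp.single i 1) F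

/-- Composition `H(f,g)` of a two-variable power series `H` with two three-variable power
series `f`, `g` (intended for `f`, `g` with zero constant term, in which case the coefficient
of a monomial `m` only receives contributions from `f^i g^j` with `i + j ≤ deg m`). -/
noncomputable def comp2 (H : MvPowerSeries (Fin 2) ℂ) (f g : MvPowerSeries (Fin 3) ℂ) :
    MvPowerSeries (Fin 3) ℂ :=
  fun m =>
    ∑ p ∈ Finset.range (m.sum (fun _ e => e) + 1) ×ˢ
        Finset.range (m.sum (fun _ e => e) + 1),
      coeff (Finsupp.single 0 p.1 + Finsupp.single 1 p.2) H *
        coeff m (f ^ p.1 * g ^ p.2)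

/-- The power series `(w₁ - w₂)/(1 - w₂)`. -/
noncomputable def subx : MvPowerSeries (Fin 3) ℂ := (X 0 - X 1) * (1 - X 1)⁻¹

/-- The power series `w₃(1 - w₂)/(1 - w₃)`. -/
noncomputable def suby : MvPowerSeries (Fin 3) ℂ := X 2 * (1 - X 1) * (1 - X 2)⁻¹

/-- `F(w₁,w₂,w₃) = H((w₁-w₂)/(1-w₂), w₃(1-w₂)/(1-w₃)) / ((1-w₂)(1-w₃))`. -/
noncomputable def FofH (H : MvPowerSeries (Fin 2) ℂ) : MvPowerSeries (Fin 3) ℂ :=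
  ((1 - X 1) * (1 - X 2))⁻¹ * comp2 H subx suby

namespace PdeAux

lemma coeff_pderiv3 (i : Fin 3) (F : MvPowerSeries (Fin 3) ℂ) (m : Fin 3 →₀ ℕ) :
    coeff m (pderiv3 i F) = ((m i : ℂ) + 1) * coeff (m + Finsupp.single i 1) F := rfl

lemma pderiv3_add (i : Fin 3) (f g : MvPowerSeries (Fin 3) ℂ) :
    pderiv3 i (f + g) = pderiv3 i f + pderiv3 i g := by
  ext m
  simp [coeff_pderiv3, mul_add]

lemma pderiv3_neg (i : Fin 3) (f : MvPowerSeries (Fin 3) ℂ) :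
    pderiv3 i (-f) = -pderiv3 i f := by
  ext m
  simp [coeff_pderiv3]

lemma pderiv3_sub (i : Fin 3) (f g : MvPowerSeries (Fin 3) ℂ) :
    pderiv3 i (f - g) = pderiv3 i f - pderiv3 i g := by
  rw [sub_eq_add_neg, pderiv3_add, pderiv3_neg, sub_eq_add_neg]

lemma pderiv3_zero (i : Fin 3) : pderiv3 i (0 : MvPowerSeries (Fin 3) ℂ) = 0 := by
  ext m
  simp [coeff_pderiv3]

lemma pderiv3_C (i : Fin 3) (c : ℂ) :
    pderiv3 i (MvPowerSeries.C c) = 0 := by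
  ext m
  rw [coeff_pderiv3, MvPowerSeries.coeff_C]
  have h : m + Finsupp.single i 1 ≠ 0 := by
    intro h
    have := DFunLike.congr_fun h i
    simp [Finsupp.single_apply] at this
  simp [h]

lemma pderiv3_one (i : Fin 3) : pderiv3 i (1 : MvPowerSeries (Fin 3) ℂ) = 0 := by
  have : (1 : MvPowerSeries (Fin 3) ℂ) = MvPowerSeries.C 1 := by simp
  rw [this, pderiv3_C]

lemma pderiv3_X_self (i : Fin 3) : pderiv3 i (X i : MvPowerSeries (Fin 3) ℂ) = 1 := by
  ext m
  rw [coeff_pderiv3, MvPowerSeries.coeff_X]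
  rcases eq_or_ne m 0 with rfl | hm
  · simp
  · have h : m + Finsupp.single i 1 ≠ Finsupp.single i 1 := by
      intro h
      exact hm (by simpa using add_right_cancel (h.trans (zero_add (Finsupp.single i 1)).symm))
    simp [h, MvPowerSeries.coeff_one, hm]

lemma pderiv3_X_ne (i j : Fin 3) (hij : j ≠ i) :
    pderiv3 i (X j : MvPowerSeries (Fin 3) ℂ) = 0 := by
  ext m
  rw [coeff_pderiv3, MvPowerSeries.coeff_X]
  have h : m + Finsupp.single i 1 ≠ Finsupp.single j 1 := by
    intro h
    have := DFunLike.congr_fun h i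
    simp [Finsupp.single_apply, Finsupp.add_apply] at this
    rw [if_neg hij] at this
    omega
  simp [h]

lemma key_shift (i : Fin 3) (m : Fin 3 →₀ ℕ) (F G : (Fin 3 →₀ ℕ) → ℂ) :
    ∑ pq ∈ Finset.HasAntidiagonal.antidiagonal (m + Finsupp.single i 1),
        (((pq.1 : Fin 3 →₀ ℕ)) i : ℂ) * (F pq.1 * G pq.2)
      = ∑ pq ∈ Finset.HasAntidiagonal.antidiagonal m,
        (((pq.1 : Fin 3 →₀ ℕ)) i + 1 : ℂ) * (F (pq.1 + Finsupp.single i 1) * G pq.2) := by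
  refine Finset.sum_bij_ne_zero (fun a _ _ => (a.1 - Finsupp.single i 1, a.2)) ?_ ?_ ?_ ?_
  · rintro ⟨p, q⟩ h₁ h₂
    rw [Finset.HasAntidiagonal.mem_antidiagonal] at h₁ ⊢
    have hpi : p i ≠ 0 := by
      intro h
      simp [h] at h₂
    ext j
    have := DFunLike.congr_fun h₁ j
    simp only [Finsupp.add_apply, Finsupp.tsub_apply, Finsupp.single_apply] at this ⊢
    rcases eq_or_ne i j with rfl | hij
    · simp at this ⊢; omega
    · simp [hij] at this ⊢; omega
  · rintro ⟨p, q⟩ h₁ h₁' ⟨p', q'⟩ h₂ h₂' heq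
    rw [Finset.HasAntidiagonal.mem_antidiagonal] at h₁ h₂
    simp only [Prod.mk.injEq] at heq
    obtain ⟨hpq, hq⟩ := heq
    subst hq
    have : p = p' := add_right_cancel (h₁.trans h₂.symm)
    simp [this]
  · rintro ⟨p, q⟩ hb hgb
    refine ⟨(p + Finsupp.single i 1, q), ?_, ?_, ?_⟩
    · rw [Finset.HasAntidiagonal.mem_antidiagonal] at hb ⊢
      rw [add_right_comm, hb]
    · simpa [add_tsub_cancel_right] using hgb
    · simp [add_tsub_cancel_right]
  · rintro ⟨p, q⟩ h₁ h₂
    have hpi : p i ≠ 0 := by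
      intro h; simp [h] at h₂
    have hle : Finsupp.single i 1 ≤ p := by
      rw [Finsupp.single_le_iff]; omega
    have h1 : p - Finsupp.single i 1 + Finsupp.single i 1 = p := tsub_add_cancel_of_le hle
    have h2 : ((p - Finsupp.single i 1 : Fin 3 →₀ ℕ)) i = p i - 1 := by
      simp [Finsupp.tsub_apply]
    simp only [h1, h2]
    have h3 : ((p i - 1 : ℕ) : ℂ) + 1 = (p i : ℂ) := by
      have h4 : p i - 1 + 1 = p i := Nat.succ_pred_eq_of_pos (Nat.pos_of_ne_zero hpi)
      exact_mod_cast congrArg (Nat.cast : ℕ → ℂ) h4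
    rw [h3]

lemma sum_antidiagonal_swap (n : Fin 3 →₀ ℕ) (h : (Fin 3 →₀ ℕ) × (Fin 3 →₀ ℕ) → ℂ) :
    ∑ pq ∈ Finset.HasAntidiagonal.antidiagonal n, h pq = ∑ pq ∈ Finset.HasAntidiagonal.antidiagonal n, h pq.swap := by
  conv_lhs => rw [← Finset.HasAntidiagonal.map_swap_antidiagonal]
  rw [Finset.sum_map]
  simp

lemma key_shift' (i : Fin 3) (m : Fin 3 →₀ ℕ) (F G : (Fin 3 →₀ ℕ) → ℂ) :
    ∑ pq ∈ Finset.HasAntidiagonal.antidiagonal (m + Finsupp.single i 1),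
        (((pq.2 : Fin 3 →₀ ℕ)) i : ℂ) * (F pq.1 * G pq.2)
      = ∑ pq ∈ Finset.HasAntidiagonal.antidiagonal m,
        (((pq.2 : Fin 3 →₀ ℕ)) i + 1 : ℂ) * (F pq.1 * G (pq.2 + Finsupp.single i 1)) := by
  rw [sum_antidiagonal_swap (m + Finsupp.single i 1), sum_antidiagonal_swap m]
  simpa [mul_comm (F _)] using key_shift i m G F

lemma pderiv3_mul (i : Fin 3) (f g : MvPowerSeries (Fin 3) ℂ) :
    pderiv3 i (f * g) = pderiv3 i f * g + f * pderiv3 i g := by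
  ext m
  rw [map_add, coeff_pderiv3, coeff_mul, coeff_mul, coeff_mul, Finset.mul_sum]
  have split : ∀ pq ∈ Finset.HasAntidiagonal.antidiagonal (m + Finsupp.single i 1),
      ((m i : ℂ) + 1) * (coeff pq.1 f * coeff pq.2 g)
        = ((pq.1 : Fin 3 →₀ ℕ) i : ℂ) * (coeff pq.1 f * coeff pq.2 g)
          + ((pq.2 : Fin 3 →₀ ℕ) i : ℂ) * (coeff pq.1 f * coeff pq.2 g) := by
    rintro ⟨p, q⟩ hpq
    rw [Finset.HasAntidiagonal.mem_antidiagonal] at hpq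
    have h0 := DFunLike.congr_fun hpq i
    simp at h0
    have h2 : ((m i : ℂ) + 1) = (p i : ℂ) + (q i : ℂ) := by exact_mod_cast h0.symm
    simp only [h2]; ring
  rw [Finset.sum_congr rfl split, Finset.sum_add_distrib,
    key_shift i m (fun p => coeff p f) (fun q => coeff q g),
    key_shift' i m (fun p => coeff p f) (fun q => coeff q g)]
  congr 1
  · apply Finset.sum_congr rfl
    rintro ⟨p, q⟩ _
    simp only [coeff_pderiv3]
    ring
  · apply Finset.sum_congr rfl
    rintro ⟨p, q⟩ _
    simp only [coeff_pderiv3]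
    ring

/-- The differential operator of the PDE. -/
noncomputable def DD (u : MvPowerSeries (Fin 3) ℂ) : MvPowerSeries (Fin 3) ℂ :=
  (1 - X 0) * pderiv3 0 u + (1 - X 1) * pderiv3 1 u + X 2 * (1 - X 2) * pderiv3 2 u

lemma DD_add (u v : MvPowerSeries (Fin 3) ℂ) : DD (u + v) = DD u + DD v := by
  simp only [DD, pderiv3_add]; ring

lemma DD_zero : DD (0 : MvPowerSeries (Fin 3) ℂ) = 0 := by
  simp [DD, pderiv3_zero]

lemma DD_sub (u v : MvPowerSeries (Fin 3) ℂ) : DD (u - v) = DD u - DD v := by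
  simp only [DD, pderiv3_sub]; ring

lemma DD_mul (u v : MvPowerSeries (Fin 3) ℂ) : DD (u * v) = DD u * v + u * DD v := by
  simp only [DD, pderiv3_mul]; ring

lemma DD_one : DD (1 : MvPowerSeries (Fin 3) ℂ) = 0 := by
  simp [DD, pderiv3_one]

lemma DD_C (c : ℂ) : DD (MvPowerSeries.C c) = 0 := by
  simp [DD, pderiv3_C]

lemma DD_X0 : DD (X 0 : MvPowerSeries (Fin 3) ℂ) = 1 - X 0 := by
  simp only [DD, pderiv3_X_self, pderiv3_X_ne 1 0 (by decide), pderiv3_X_ne 2 0 (by decide)]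
  ring

lemma DD_X1 : DD (X 1 : MvPowerSeries (Fin 3) ℂ) = 1 - X 1 := by
  simp only [DD, pderiv3_X_self, pderiv3_X_ne 0 1 (by decide), pderiv3_X_ne 2 1 (by decide)]
  ring

lemma DD_X2 : DD (X 2 : MvPowerSeries (Fin 3) ℂ) = X 2 * (1 - X 2) := by
  simp only [DD, pderiv3_X_self, pderiv3_X_ne 0 2 (by decide), pderiv3_X_ne 1 2 (by decide)]
  ring

lemma DD_inv (u : MvPowerSeries (Fin 3) ℂ) (h : constantCoeff u ≠ 0) :
    DD u⁻¹ = -(u⁻¹ * u⁻¹ * DD u) := by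
  have h1 : u * u⁻¹ = 1 := MvPowerSeries.mul_inv_cancel u h
  have h2 : DD u * u⁻¹ + u * DD u⁻¹ = 0 := by
    rw [← DD_mul, h1, DD_one]
  linear_combination u⁻¹ * h2 - DD u⁻¹ * h1

lemma DD_one_sub_X1 : DD (1 - X 1 : MvPowerSeries (Fin 3) ℂ) = -(1 - X 1) := by
  rw [DD_sub, DD_one, DD_X1]; ring

lemma DD_one_sub_X2 : DD (1 - X 2 : MvPowerSeries (Fin 3) ℂ) = -(X 2 * (1 - X 2)) := by
  rw [DD_sub, DD_one, DD_X2]; ring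

lemma constCoeff_one_sub_X1 : constantCoeff (1 - X 1 : MvPowerSeries (Fin 3) ℂ) ≠ 0 := by
  simp

lemma constCoeff_one_sub_X2 : constantCoeff (1 - X 2 : MvPowerSeries (Fin 3) ℂ) ≠ 0 := by
  simp

lemma DD_subx : DD subx = 0 := by
  have hv : (1 - X 1 : MvPowerSeries (Fin 3) ℂ) * (1 - X 1)⁻¹ = 1 :=
    MvPowerSeries.mul_inv_cancel _ constCoeff_one_sub_X1
  rw [subx, DD_mul, DD_inv _ constCoeff_one_sub_X1, DD_one_sub_X1, DD_sub, DD_X0, DD_X1]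
  linear_combination (X 0 - X 1 : MvPowerSeries (Fin 3) ℂ) * (1 - X 1)⁻¹ * hv

lemma DD_suby : DD suby = 0 := by
  have hv : (1 - X 2 : MvPowerSeries (Fin 3) ℂ) * (1 - X 2)⁻¹ = 1 :=
    MvPowerSeries.mul_inv_cancel _ constCoeff_one_sub_X2
  rw [suby, DD_mul, DD_inv _ constCoeff_one_sub_X2, DD_one_sub_X2, DD_mul, DD_X2,
    DD_one_sub_X1]
  linear_combination (X 2 * X 2 * (1 - X 1) : MvPowerSeries (Fin 3) ℂ) * (1 - X 2)⁻¹ * hv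

lemma constCoeff_A : constantCoeff ((1 - X 1) * (1 - X 2) : MvPowerSeries (Fin 3) ℂ) ≠ 0 := by
  simp

lemma DD_Ainv :
    DD ((1 - X 1) * (1 - X 2) : MvPowerSeries (Fin 3) ℂ)⁻¹
      = (1 + X 2) * ((1 - X 1) * (1 - X 2))⁻¹ := by
  have hA : ((1 - X 1) * (1 - X 2) : MvPowerSeries (Fin 3) ℂ)
      * ((1 - X 1) * (1 - X 2))⁻¹ = 1 :=
    MvPowerSeries.mul_inv_cancel _ constCoeff_A
  rw [DD_inv _ constCoeff_A, DD_mul, DD_one_sub_X1, DD_one_sub_X2]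
  linear_combination ((1 + X 2) * ((1 - X 1) * (1 - X 2) : MvPowerSeries (Fin 3) ℂ)⁻¹) * hA

lemma DD_pow (f : MvPowerSeries (Fin 3) ℂ) (h : DD f = 0) (n : ℕ) : DD (f ^ n) = 0 := by
  induction n with
  | zero => simpa using DD_one
  | succ n ih => rw [pow_succ, DD_mul, ih, h]; ring

lemma DD_sum {α : Type*} (s : Finset α) (F : α → MvPowerSeries (Fin 3) ℂ) :
    DD (∑ x ∈ s, F x) = ∑ x ∈ s, DD (F x) := by
  classical
  induction s using Finset.induction_on with
  | empty => simpa using DD_zero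
  | insert _ _ hx ih => rw [Finset.sum_insert hx, Finset.sum_insert hx, DD_add, ih]

/-- degree of a monomial -/
abbrev deg (m : Fin 3 →₀ ℕ) : ℕ := m.sum fun _ e => e

lemma deg_add (p q : Fin 3 →₀ ℕ) : deg (p + q) = deg p + deg q :=
  Finsupp.sum_add_index' (fun _ => rfl) (fun _ _ _ => rfl)

lemma deg_single (i : Fin 3) (n : ℕ) : deg (Finsupp.single i n) = n :=
  Finsupp.sum_single_index rfl

lemma deg_pos_of_ne_zero {p : Fin 3 →₀ ℕ} (hp : p ≠ 0) : 1 ≤ deg p := by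
  rcases Finsupp.ne_iff.1 hp with ⟨j, hj⟩
  simp only [Finsupp.coe_zero, Pi.zero_apply] at hj
  have hj' : j ∈ p.support := Finsupp.mem_support_iff.2 hj
  calc 1 ≤ p j := Nat.one_le_iff_ne_zero.2 hj
  _ ≤ deg p := Finset.single_le_sum (fun _ _ => Nat.zero_le _) hj'

lemma coeff_pow_mul_eq_zero (f : MvPowerSeries (Fin 3) ℂ)
    (hf : constantCoeff f = 0) :
    ∀ (k : ℕ) (h : MvPowerSeries (Fin 3) ℂ) (m : Fin 3 →₀ ℕ),
      deg m < k → coeff m (f ^ k * h) = 0 := by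
  intro k
  induction k with
  | zero => intro h m hm; omega
  | succ k ih =>
    intro h m hm
    rw [pow_succ, mul_comm (f ^ k) f, mul_assoc, coeff_mul]
    apply Finset.sum_eq_zero
    rintro ⟨p, q⟩ hpq
    rw [Finset.HasAntidiagonal.mem_antidiagonal] at hpq
    rcases eq_or_ne p 0 with rfl | hp
    · simp [MvPowerSeries.coeff_zero_eq_constantCoeff, hf]
    · have hdq : deg q < k := by
        have h1 := deg_pos_of_ne_zero hp
        have h2 : deg p + deg q = deg m := by rw [← deg_add, hpq]
        omega
      rw [ih h q hdq, mul_zero]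

lemma coeff_comp2 (H : MvPowerSeries (Fin 2) ℂ) (f g : MvPowerSeries (Fin 3) ℂ)
    (m : Fin 3 →₀ ℕ) :
    coeff m (comp2 H f g)
      = ∑ p ∈ Finset.range (deg m + 1) ×ˢ Finset.range (deg m + 1),
          coeff (Finsupp.single 0 p.1 + Finsupp.single 1 p.2) H *
            coeff m (f ^ p.1 * g ^ p.2) := rfl

/-- The truncated finite sum approximation. -/
noncomputable def truncSum (H : MvPowerSeries (Fin 2) ℂ) (f g : MvPowerSeries (Fin 3) ℂ)
    (N : ℕ) : MvPowerSeries (Fin 3) ℂ :=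
  ∑ p ∈ Finset.range (N + 1) ×ˢ Finset.range (N + 1),
    MvPowerSeries.C (coeff (Finsupp.single 0 p.1 + Finsupp.single 1 p.2) H) *
      (f ^ p.1 * g ^ p.2)

lemma coeff_comp2_eq_truncSum (H : MvPowerSeries (Fin 2) ℂ)
    (f g : MvPowerSeries (Fin 3) ℂ)
    (hf : constantCoeff f = 0) (hg : constantCoeff g = 0)
    (m : Fin 3 →₀ ℕ) (N : ℕ) (hN : deg m ≤ N) :
    coeff m (comp2 H f g) = coeff m (truncSum H f g N) := by
  rw [coeff_comp2, truncSum, map_sum]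
  simp only [MvPowerSeries.coeff_C_mul]
  apply Finset.sum_subset
  · apply Finset.product_subset_product <;> exact Finset.range_subset_range.2 (by omega)
  · rintro ⟨a, b⟩ hab hab'
    simp only [Finset.mem_product, Finset.mem_range] at hab hab'
    have : deg m < a ∨ deg m < b := by omega
    rcases this with h | h
    · rw [coeff_pow_mul_eq_zero f hf a _ m h, mul_zero]
    · rw [mul_comm (f ^ a), coeff_pow_mul_eq_zero g hg b _ m h, mul_zero]

lemma coeff_mul_pderiv3_eq_zero (v u : MvPowerSeries (Fin 3) ℂ) (i : Fin 3)
    (m : Fin 3 →₀ ℕ)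
    (h : ∀ m' : Fin 3 →₀ ℕ, deg m' ≤ deg m + 1 → coeff m' u = 0) :
    coeff m (v * pderiv3 i u) = 0 := by
  rw [coeff_mul]
  apply Finset.sum_eq_zero
  rintro ⟨p, q⟩ hpq
  rw [Finset.HasAntidiagonal.mem_antidiagonal] at hpq
  have hq : deg q ≤ deg m := by
    have : deg p + deg q = deg m := by rw [← deg_add, hpq]
    omega
  rw [coeff_pderiv3, h (q + Finsupp.single i 1) (by rw [deg_add, deg_single]; omega)]
  ring

lemma coeff_DD_eq_zero (u : MvPowerSeries (Fin 3) ℂ) (m : Fin 3 →₀ ℕ)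
    (h : ∀ m' : Fin 3 →₀ ℕ, deg m' ≤ deg m + 1 → coeff m' u = 0) :
    coeff m (DD u) = 0 := by
  rw [DD, map_add, map_add,
    coeff_mul_pderiv3_eq_zero _ u 0 m h, coeff_mul_pderiv3_eq_zero _ u 1 m h,
    coeff_mul_pderiv3_eq_zero _ u 2 m h]
  ring

lemma constCoeff_subx : constantCoeff subx = 0 := by
  simp [subx]

lemma constCoeff_suby : constantCoeff suby = 0 := by
  simp [suby]

lemma DD_truncSum (H : MvPowerSeries (Fin 2) ℂ) (N : ℕ) :
    DD (truncSum H subx suby N) = 0 := by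
  rw [truncSum, DD_sum]
  apply Finset.sum_eq_zero
  rintro ⟨a, b⟩ _
  rw [DD_mul, DD_C, DD_mul, DD_pow subx DD_subx, DD_pow suby DD_suby]
  ring

lemma DD_comp2 (H : MvPowerSeries (Fin 2) ℂ) : DD (comp2 H subx suby) = 0 := by
  ext m
  rw [map_zero]
  have key : coeff m (DD (comp2 H subx suby - truncSum H subx suby (deg m + 1))) = 0 := by
    apply coeff_DD_eq_zero
    intro m' hm'
    rw [map_sub, coeff_comp2_eq_truncSum H subx suby constCoeff_subx constCoeff_suby m'
      (deg m + 1) hm', sub_self]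
  rw [DD_sub, DD_truncSum, sub_zero] at key
  exact key

end PdeAux

open PdeAux in
theorem FofH_satisfies_pde (H : MvPowerSeries (Fin 2) ℂ) :
    (1 - X 0) * pderiv3 0 (FofH H) + (1 - X 1) * pderiv3 1 (FofH H) +
        X 2 * (1 - X 2) * pderiv3 2 (FofH H) = (1 + X 2) * FofH H := by
  show DD (FofH H) = (1 + X 2) * FofH H
  rw [FofH, DD_mul, DD_Ainv, DD_comp2, mul_zero, add_zero, mul_assoc]
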